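/- Let k1 ≥ 2 and let D(k1,1) be the double-star obtained by joining the centres of the stars K_{1,k1} and K_{1,1} by an edge, so D(k1,1) has n = k1 + 3 vertices; assume n ≡ 1 (mod 3). Then R(D(k1,1), Z_3) = n + 1. -/

import Mathlib

open SimpleGraph Finset
open scoped Classical

/-- The double-star `D(k, 1)`: vertex `0` is a centre adjacent to the centre `1`
and to the `k` leaves `2, …, k + 1`; vertex `1` is additionally adjacent to the
leaf `k + 2`. It has `k + 3` vertices. -/
def doubleStar (k : ℕ) : SimpleGraph (Fin (k + 3)) :=
  SimpleGraph.fromRel (fun i j =>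
    ((i : ℕ) = 0 ∧ (j : ℕ) = 1) ∨
    ((i : ℕ) = 0 ∧ 2 ≤ (j : ℕ) ∧ (j : ℕ) ≤ k + 1) ∨
    ((i : ℕ) = 1 ∧ (j : ℕ) = k + 2))

lemma doubleStar_edgeFinset (k : ℕ) :
    (doubleStar k).edgeFinset =
      insert s((⟨0, by omega⟩ : Fin (k+3)), (⟨1, by omega⟩ : Fin (k+3)))
        (insert s((⟨1, by omega⟩ : Fin (k+3)), (⟨k+2, by omega⟩ : Fin (k+3)))
          ((Finset.univ : Finset (Fin k)).image
            (fun (j : Fin k) => s((⟨0, by omega⟩ : Fin (k+3)),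
              (⟨(j:ℕ)+2, by have := j.2; omega⟩ : Fin (k+3)))))) := by
  ext e
  induction e using Sym2.ind with
  | _ a b =>
    rw [mem_edgeFinset]
    simp only [mem_edgeFinset, mem_edgeSet, doubleStar, fromRel_adj, Finset.mem_insert,
      Finset.mem_image, Finset.mem_univ, true_and, Sym2.eq_iff]
    constructor
    · rintro ⟨hab, (⟨h1,h2⟩|⟨h1,h2,h3⟩|⟨h1,h2⟩)|(⟨h1,h2⟩|⟨h1,h2,h3⟩|⟨h1,h2⟩)⟩
      · exact Or.inl (Or.inl ⟨Fin.ext h1, Fin.ext h2⟩)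
      · exact Or.inr (Or.inr ⟨⟨(b:ℕ)-2, by omega⟩, Or.inl ⟨Fin.ext h1.symm, Fin.ext (by simp; omega)⟩⟩)
      · exact Or.inr (Or.inl (Or.inl ⟨Fin.ext h1, Fin.ext h2⟩))
      · exact Or.inl (Or.inr ⟨Fin.ext h2, Fin.ext h1⟩)
      · exact Or.inr (Or.inr ⟨⟨(a:ℕ)-2, by omega⟩, Or.inr ⟨Fin.ext h1.symm, Fin.ext (by simp; omega)⟩⟩)
      · exact Or.inr (Or.inl (Or.inr ⟨Fin.ext h2, Fin.ext h1⟩))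
    · rintro ((⟨h1,h2⟩|⟨h1,h2⟩)|(⟨h1,h2⟩|⟨h1,h2⟩)|⟨j,(⟨h1,h2⟩|⟨h1,h2⟩)⟩) <;> subst h1 <;> subst h2
      · exact ⟨by simp [Fin.ext_iff], Or.inl (Or.inl ⟨rfl, rfl⟩)⟩
      · exact ⟨by simp [Fin.ext_iff], Or.inr (Or.inl ⟨rfl, rfl⟩)⟩
      · exact ⟨by simp [Fin.ext_iff], Or.inl (Or.inr (Or.inr ⟨rfl, rfl⟩))⟩
      · exact ⟨by simp [Fin.ext_iff], Or.inr (Or.inr (Or.inr ⟨rfl, rfl⟩))⟩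
      · exact ⟨by simp [Fin.ext_iff], Or.inl (Or.inr (Or.inl ⟨rfl, (by omega : 2 ≤ (j:ℕ)+2), (by have := j.2; omega : (j:ℕ)+2 ≤ k+1)⟩))⟩
      · exact ⟨by simp [Fin.ext_iff], Or.inr (Or.inr (Or.inl ⟨rfl, (by omega : 2 ≤ (j:ℕ)+2), (by have := j.2; omega : (j:ℕ)+2 ≤ k+1)⟩))⟩

lemma doubleStar_sum {k m : ℕ} (f : Fin (k+3) → Fin m) (c : Sym2 (Fin m) → ZMod 3) :
    ∑ e ∈ (doubleStar k).edgeFinset, c (e.map f)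
      = c s(f ⟨0, by omega⟩, f ⟨1, by omega⟩) + c s(f ⟨1, by omega⟩, f ⟨k+2, by omega⟩)
        + ∑ j : Fin k, c s(f ⟨0, by omega⟩, f ⟨(j:ℕ)+2, by have := j.2; omega⟩) := by
  rw [doubleStar_edgeFinset]
  rw [Finset.sum_insert (by
    simp only [Finset.mem_insert, Finset.mem_image, Finset.mem_univ, true_and, Sym2.eq_iff,
      Fin.ext_iff, Fin.val_mk, not_or, not_exists]
    refine ⟨by omega, fun j => by push_neg; constructor <;> rintro ⟨h1, h2⟩ <;>
      (first | exact absurd h1 (by have := j.2; omega) | exact absurd h2 (by have := j.2; omega))⟩)]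
  rw [Finset.sum_insert (by
    intro hmem
    simp only [Finset.mem_image, Finset.mem_univ, true_and] at hmem
    obtain ⟨j, hj⟩ := hmem
    rw [Sym2.eq_iff] at hj
    rcases hj with ⟨h1, h2⟩ | ⟨h1, h2⟩
    · exact absurd h1 (by simp [Fin.ext_iff])
    · exact absurd h1 (by simp [Fin.ext_iff]))]
  rw [Finset.sum_image (by
    intro x _ y _ h
    simp only [Sym2.eq_iff, Fin.ext_iff, Fin.val_mk] at h
    rcases h with ⟨-, h⟩ | ⟨h1, -⟩
    · exact Fin.ext (by omega)
    · exact absurd h1 (by have := x.2; omega))]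
  simp only [Sym2.map_pair_eq]
  ring

lemma lower_bound (k1 : ℕ) (hk : 2 ≤ k1) (hn : (k1 + 3) % 3 = 1)
    (c : Sym2 (Fin (k1+3)) → ZMod 3)
    (hce : ∀ e, c e = if (0 : Fin (k1+3)) ∈ e then (1 : ZMod 3) else 0)
    (f : Fin (k1+3) ↪ Fin (k1+3)) :
    ∑ e ∈ (doubleStar k1).edgeFinset, c (e.map f) ≠ 0 := by
  have hsurj : Function.Surjective f := (Finite.injective_iff_bijective.mp f.injective).2
  obtain ⟨i, hi⟩ := hsurj 0
  rw [doubleStar_sum]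
  have key : ∀ a b : Fin (k1+3),
      c s(f a, f b) = if (a = i ∨ b = i) then 1 else 0 := by
    intro a b
    rw [hce]
    refine if_congr ?_ rfl rfl
    rw [Sym2.mem_iff, ← hi]
    constructor
    · rintro (h | h)
      · exact Or.inl (f.injective h.symm)
      · exact Or.inr (f.injective h.symm)
    · rintro (h | h)
      · exact Or.inl (congrArg f h).symm
      · exact Or.inr (congrArg f h).symm
  simp only [key]
  have hk1 : (k1 : ZMod 3) = 1 := by
    rw [← ZMod.natCast_mod]
    norm_num [show k1 % 3 = 1 by omega]
  by_cases h0 : (i : ℕ) = 0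
  · have e0 : (⟨0, by omega⟩ : Fin (k1+3)) = i := (Fin.ext h0).symm
    rw [if_pos (Or.inl e0),
      if_neg (by rintro (h | h) <;> simp [Fin.ext_iff] at h <;> omega)]
    have : ∀ j : Fin k1, (if ((⟨0, by omega⟩ : Fin (k1+3)) = i ∨
        (⟨(j:ℕ)+2, by have := j.2; omega⟩ : Fin (k1+3)) = i) then (1:ZMod 3) else 0) = 1 :=
      fun j => if_pos (Or.inl e0)
    rw [Finset.sum_congr rfl (fun j _ => this j)]
    simp only [Finset.sum_const, Finset.card_univ, Fintype.card_fin, nsmul_eq_mul, mul_one, hk1]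
    decide
  · by_cases h1 : (i : ℕ) = 1
    · have e1 : (⟨1, by omega⟩ : Fin (k1+3)) = i := (Fin.ext h1).symm
      rw [if_pos (Or.inr e1), if_pos (Or.inl e1)]
      have : ∀ j : Fin k1, (if ((⟨0, by omega⟩ : Fin (k1+3)) = i ∨
          (⟨(j:ℕ)+2, by have := j.2; omega⟩ : Fin (k1+3)) = i) then (1:ZMod 3) else 0) = 0 :=
        fun j => if_neg (by rintro (h | h) <;> simp [Fin.ext_iff] at h <;>
          (have := j.2; omega))
      rw [Finset.sum_congr rfl (fun j _ => this j)]
      simp only [Finset.sum_const, nsmul_eq_mul, mul_zero]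
      decide
    · by_cases h2 : (i : ℕ) = k1 + 2
      · have e2 : (⟨k1+2, by omega⟩ : Fin (k1+3)) = i := (Fin.ext h2).symm
        rw [if_neg (by rintro (h | h) <;> simp [Fin.ext_iff] at h <;> omega),
          if_pos (Or.inr e2)]
        have : ∀ j : Fin k1, (if ((⟨0, by omega⟩ : Fin (k1+3)) = i ∨
            (⟨(j:ℕ)+2, by have := j.2; omega⟩ : Fin (k1+3)) = i) then (1:ZMod 3) else 0) = 0 :=
          fun j => if_neg (by rintro (h | h) <;> simp [Fin.ext_iff] at h <;>
            (have := j.2; omega))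
        rw [Finset.sum_congr rfl (fun j _ => this j)]
        simp only [Finset.sum_const, nsmul_eq_mul, mul_zero]
        decide
      · have hge : 2 ≤ (i : ℕ) ∧ (i : ℕ) ≤ k1 + 1 := by have := i.2; omega
        rw [if_neg (by rintro (h | h) <;> simp [Fin.ext_iff] at h <;> omega),
          if_neg (by rintro (h | h) <;> simp [Fin.ext_iff] at h <;> omega)]
        have : ∀ j : Fin k1, (if ((⟨0, by omega⟩ : Fin (k1+3)) = i ∨
            (⟨(j:ℕ)+2, by have := j.2; omega⟩ : Fin (k1+3)) = i) then (1:ZMod 3) else 0)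
            = if j = (⟨(i:ℕ)-2, by omega⟩ : Fin k1) then 1 else 0 := by
          intro j
          refine if_congr ?_ rfl rfl
          constructor
          · rintro (h | h)
            · simp [Fin.ext_iff] at h; omega
            · simp [Fin.ext_iff] at h
              exact Fin.ext (by simp; omega)
          · intro h
            simp [Fin.ext_iff] at h
            exact Or.inr (Fin.ext (by simp; omega))
        rw [Finset.sum_congr rfl (fun j _ => this j)]
        rw [Finset.sum_ite_eq' Finset.univ]
        simp only [Finset.mem_univ, if_pos]
        decide

def Tsum (k1 : ℕ) (c : Sym2 (Fin (k1+4)) → ZMod 3) (u : Fin (k1+4)) : ZMod 3 :=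
  ∑ y ∈ Finset.univ.erase u, c s(u, y)

lemma exists_outside {n : ℕ} (s : Finset (Fin n)) (h : s.card < n) : ∃ x, x ∉ s := by
  by_contra h'
  push_neg at h'
  have hsub : (Finset.univ : Finset (Fin n)) ⊆ s := fun x _ => h' x
  have := Finset.card_le_card hsub
  simp at this
  omega

lemma missing_value (k1 : ℕ) (hk4 : 4 ≤ k1) (c : Sym2 (Fin (k1+4)) → ZMod 3)
    (HF : ∀ u v w x : Fin (k1+4), v ≠ u → w ≠ u → x ≠ u → v ≠ w → x ≠ v → x ≠ w →
      c s(v,w) ≠ c s(u,w) + c s(u,x) - Tsum k1 c u)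
    (u : Fin (k1+4)) : ∃ i : ZMod 3, ∀ y, y ≠ u → c s(u,y) ≠ i := by
  by_contra hctr
  push_neg at hctr
  set S := Finset.univ.erase u with hS
  have hScard : S.card = k1 + 3 := by
    simp [hS, Finset.card_erase_of_mem]
  have hclass : ∃ i : ZMod 3, 3 ≤ (S.filter (fun y => c s(u,y) = i)).card := by
    by_contra hc2
    push_neg at hc2
    have hsub : S ⊆ (S.filter (fun y => c s(u,y) = 0)) ∪
        ((S.filter (fun y => c s(u,y) = 1)) ∪ (S.filter (fun y => c s(u,y) = 2))) := by
      intro y hy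
      have h3 : c s(u,y) = 0 ∨ c s(u,y) = 1 ∨ c s(u,y) = 2 := by
        have hall : ∀ z : ZMod 3, z = 0 ∨ z = 1 ∨ z = 2 := by decide
        exact hall _
      rcases h3 with h|h|h <;> simp [Finset.mem_union, Finset.mem_filter, hy, h]
    have hcc := Finset.card_le_card hsub
    have h1 := Finset.card_union_le (S.filter (fun y => c s(u,y) = 0))
      ((S.filter (fun y => c s(u,y) = 1)) ∪ (S.filter (fun y => c s(u,y) = 2)))
    have h2 := Finset.card_union_le (S.filter (fun y => c s(u,y) = 1))
      (S.filter (fun y => c s(u,y) = 2))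
    have c0 := hc2 0; have c1 := hc2 1; have c2 := hc2 2
    omega
  obtain ⟨i, hi3⟩ := hclass
  obtain ⟨v, hv, w, hw, hvw⟩ := Finset.one_lt_card.mp
    (by omega : 1 < (S.filter (fun y => c s(u,y) = i)).card)
  have hvS := Finset.mem_filter.mp hv
  have hwS := Finset.mem_filter.mp hw
  have hvu : v ≠ u := Finset.ne_of_mem_erase hvS.1
  have hwu : w ≠ u := Finset.ne_of_mem_erase hwS.1
  obtain ⟨x, hxu, hxv, hxw, hxval⟩ :
      ∃ x, x ≠ u ∧ x ≠ v ∧ x ≠ w ∧ c s(u,x) = c s(v,w) - c s(u,w) + Tsum k1 c u := by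
    by_cases hzi : c s(v,w) - c s(u,w) + Tsum k1 c u = i
    · have hw' : w ∈ (S.filter (fun y => c s(u,y) = i)).erase v :=
        Finset.mem_erase.mpr ⟨hvw.symm, hw⟩
      have hcard : 0 < (((S.filter (fun y => c s(u,y) = i)).erase v).erase w).card := by
        rw [Finset.card_erase_of_mem hw', Finset.card_erase_of_mem hv]
        omega
      obtain ⟨x, hx⟩ := Finset.card_pos.mp hcard
      have hx1 := Finset.mem_erase.mp hx
      have hx2 := Finset.mem_erase.mp hx1.2
      have hx3 := Finset.mem_filter.mp hx2.2
      exact ⟨x, Finset.ne_of_mem_erase hx3.1, hx2.1, hx1.1, by rw [hx3.2, hzi]⟩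
    · obtain ⟨y, hyu, hyval⟩ := hctr (c s(v,w) - c s(u,w) + Tsum k1 c u)
      refine ⟨y, hyu, ?_, ?_, hyval⟩
      · intro h; subst h; rw [hyval] at hvS; exact hzi hvS.2
      · intro h; subst h; rw [hyval] at hwS; exact hzi hwS.2
  exact HF u v w x hvu hwu hxu hvw hxv hxw (by rw [hxval]; ring)

lemma Tsum_single (k1 : ℕ) (h31 : k1 % 3 = 1) (c : Sym2 (Fin (k1+4)) → ZMod 3)
    (u b : Fin (k1+4)) (hb : b ≠ u) (α β : ZMod 3)
    (hgb : c s(u,b) = β) (hA : ∀ y, y ≠ u → y ≠ b → c s(u,y) = α) :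
    Tsum k1 c u = β := by
  unfold Tsum
  have hbmem : b ∈ Finset.univ.erase u := Finset.mem_erase.mpr ⟨hb, Finset.mem_univ b⟩
  rw [← Finset.add_sum_erase _ _ hbmem, hgb]
  have hcongr : ∀ y ∈ (Finset.univ.erase u).erase b, c s(u,y) = α := fun y hy =>
    hA y (Finset.ne_of_mem_erase (Finset.mem_erase.mp hy).2) (Finset.mem_erase.mp hy).1
  rw [Finset.sum_congr rfl hcongr, Finset.sum_const]
  have hcard : ((Finset.univ.erase u).erase b).card = k1+2 := by
    rw [Finset.card_erase_of_mem hbmem, Finset.card_erase_of_mem (Finset.mem_univ u)]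
    simp
  rw [hcard]
  have h0 : ((k1+2 : ℕ) : ZMod 3) = 0 := by
    rw [← ZMod.natCast_mod]
    norm_num [show (k1+2) % 3 = 0 by omega]
  rw [nsmul_eq_mul, h0, zero_mul, add_zero]

lemma Tsum_const (k1 : ℕ) (h31 : k1 % 3 = 1) (c : Sym2 (Fin (k1+4)) → ZMod 3)
    (u : Fin (k1+4)) (a : ZMod 3) (h : ∀ y, y ≠ u → c s(u,y) = a) :
    Tsum k1 c u = a := by
  unfold Tsum
  have hcongr : ∀ y ∈ Finset.univ.erase u, c s(u,y) = a := fun y hy =>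
    h y (Finset.ne_of_mem_erase hy)
  rw [Finset.sum_congr rfl hcongr, Finset.sum_const]
  have hcard : (Finset.univ.erase u).card = k1+3 := by
    rw [Finset.card_erase_of_mem (Finset.mem_univ u)]
    simp
  rw [hcard]
  have h1 : ((k1+3 : ℕ) : ZMod 3) = 1 := by
    rw [← ZMod.natCast_mod]
    norm_num [show (k1+3) % 3 = 1 by omega]
  rw [nsmul_eq_mul, h1, one_mul]

lemma const_case (k1 : ℕ) (hk4 : 4 ≤ k1) (h31 : k1 % 3 = 1) (c : Sym2 (Fin (k1+4)) → ZMod 3)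
    (HF : ∀ u v w x : Fin (k1+4), v ≠ u → w ≠ u → x ≠ u → v ≠ w → x ≠ v → x ≠ w →
      c s(v,w) ≠ c s(u,w) + c s(u,x) - Tsum k1 c u)
    (u : Fin (k1+4)) (a : ZMod 3) (hconst : ∀ y, y ≠ u → c s(u,y) = a) : False := by
  have hT : Tsum k1 c u = a := Tsum_const k1 h31 c u a hconst
  have stepA : ∀ v w : Fin (k1+4), v ≠ u → w ≠ u → v ≠ w → c s(v,w) ≠ a := by
    intro v w hvu hwu hvw hEq
    obtain ⟨x, hx⟩ := exists_outside ({u,v,w} : Finset (Fin (k1+4))) (by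
      have h1 := Finset.card_insert_le u ({v,w} : Finset (Fin (k1+4)))
      have h2 := Finset.card_insert_le v ({w} : Finset (Fin (k1+4)))
      simp only [Finset.card_singleton] at h1 h2
      omega)
    simp only [Finset.mem_insert, Finset.mem_singleton, not_or] at hx
    exact HF u v w x hvu hwu hx.1 hvw hx.2.1 hx.2.2
      (hEq.trans (by rw [hconst w hwu, hconst x hx.1, hT]; ring))
  have stepB : ∀ p : Fin (k1+4), p ≠ u → ∃ b, ∀ y, y ≠ u → y ≠ p → c s(p,y) = b := by
    intro p hp
    obtain ⟨i, hi⟩ := missing_value k1 hk4 c HF p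
    have hpu : c s(p,u) = a := by
      rw [show (s(p,u) : Sym2 (Fin (k1+4))) = s(u,p) from Sym2.eq_swap]
      exact hconst p hp
    have hia : i ≠ a := fun h => hi u (Ne.symm hp) (hpu.trans h.symm)
    obtain ⟨y0, hy0⟩ := exists_outside ({u,p} : Finset (Fin (k1+4))) (by
      have h1 := Finset.card_insert_le u ({p} : Finset (Fin (k1+4)))
      simp only [Finset.card_singleton] at h1
      omega)
    simp only [Finset.mem_insert, Finset.mem_singleton, not_or] at hy0
    refine ⟨c s(p,y0), fun y hyu hyp => ?_⟩
    have fact : ∀ z1 z2 i a : ZMod 3, i ≠ a → z1 ≠ i → z2 ≠ i → z1 ≠ a → z2 ≠ a → z1 = z2 := by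
      decide
    exact fact _ _ i a hia (hi y hyp) (hi y0 hy0.2)
      (stepA p y hp hyu (Ne.symm hyp)) (stepA p y0 hp hy0.1 (Ne.symm hy0.2))
  obtain ⟨u', hu'⟩ := exists_outside ({u} : Finset (Fin (k1+4))) (by simp only [Finset.card_singleton]; omega)
  simp only [Finset.mem_singleton] at hu'
  obtain ⟨b, hb⟩ := stepB u' hu'
  have h2c : 1 < ((Finset.univ : Finset (Fin (k1+4))) \ {u,u'}).card := by
    rw [Finset.card_sdiff_of_subset (Finset.subset_univ _)]
    have h1 := Finset.card_insert_le u ({u'} : Finset (Fin (k1+4)))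
    simp only [Finset.card_singleton] at h1
    simp only [Finset.card_univ, Fintype.card_fin]
    omega
  obtain ⟨v, hv, w, hw, hvw⟩ := Finset.one_lt_card.mp h2c
  simp only [Finset.mem_sdiff, Finset.mem_univ, true_and, Finset.mem_insert,
    Finset.mem_singleton, not_or] at hv hw
  obtain ⟨bv, hbv⟩ := stepB v hv.1
  have hlink : bv = b := by
    have h1 : c s(v, u') = bv := hbv u' hu' (Ne.symm hv.2)
    have h2 : c s(u', v) = b := hb v hv.1 hv.2
    rw [← h1, show (s(v,u') : Sym2 (Fin (k1+4))) = s(u',v) from Sym2.eq_swap, h2]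
  have hu'u : c s(u',u) = a := by
    rw [show (s(u',u) : Sym2 (Fin (k1+4))) = s(u,u') from Sym2.eq_swap]
    exact hconst u' hu'
  have hTu' : Tsum k1 c u' = a :=
    Tsum_single k1 h31 c u' u (Ne.symm hu') b a hu'u (fun y hyu' hyu => hb y hyu hyu')
  have hcvw : c s(v,w) = b := (hbv w hw.1 (Ne.symm hvw)).trans hlink
  exact HF u' v w u hv.2 hw.2 (Ne.symm hu') hvw (Ne.symm hv.1) (Ne.symm hw.1)
    (hcvw.trans (by rw [hb w hw.1 hw.2, hu'u, hTu']; ring))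

lemma single_case (k1 : ℕ) (hk4 : 4 ≤ k1) (h31 : k1 % 3 = 1) (c : Sym2 (Fin (k1+4)) → ZMod 3)
    (HF : ∀ u v w x : Fin (k1+4), v ≠ u → w ≠ u → x ≠ u → v ≠ w → x ≠ v → x ≠ w →
      c s(v,w) ≠ c s(u,w) + c s(u,x) - Tsum k1 c u)
    (u b : Fin (k1+4)) (hbu : b ≠ u) (α β : ZMod 3) (hab : α ≠ β)
    (hgb : c s(u,b) = β) (hA : ∀ y, y ≠ u → y ≠ b → c s(u,y) = α) :
    ∀ y, y ≠ b → c s(b,y) = β := by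
  have hT : Tsum k1 c u = β := Tsum_single k1 h31 c u b hbu α β hgb hA
  intro y hyb
  by_cases hyu : y = u
  · subst hyu
    rw [show (s(b,y) : Sym2 (Fin (k1+4))) = s(y,b) from Sym2.eq_swap]
    exact hgb
  · obtain ⟨q, hq⟩ := exists_outside ({u,b,y} : Finset (Fin (k1+4))) (by
      have h1 := Finset.card_insert_le u ({b,y} : Finset (Fin (k1+4)))
      have h2 := Finset.card_insert_le b ({y} : Finset (Fin (k1+4)))
      simp only [Finset.card_singleton] at h1 h2
      omega)
    simp only [Finset.mem_insert, Finset.mem_singleton, not_or] at hq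
    obtain ⟨hqu, hqb, hqy⟩ := hq
    have hquval : c s(u,q) = α := hA q hqu hqb
    have hyval : c s(u,y) = α := hA y hyu hyb
    have h1 := HF u y b q hyu hbu hqu hyb hqy hqb
    have h2 := HF u b y q hbu hyu hqu (Ne.symm hyb) hqb hqy
    rw [hgb, hquval, hT] at h1
    rw [hyval, hquval, hT] at h2
    rw [show (s(y,b) : Sym2 (Fin (k1+4))) = s(b,y) from Sym2.eq_swap] at h1
    have fact : ∀ z α β : ZMod 3, α ≠ β → z ≠ β + α - β → z ≠ α + α - β → z = β := by decide
    exact fact _ α β hab h1 h2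

lemma core (k1 : ℕ) (hk4 : 4 ≤ k1) (h31 : k1 % 3 = 1) (c : Sym2 (Fin (k1+4)) → ZMod 3) :
    ∃ u v w x : Fin (k1+4), (v ≠ u ∧ w ≠ u ∧ x ≠ u ∧ v ≠ w ∧ x ≠ v ∧ x ≠ w) ∧
      c s(v,w) = c s(u,w) + c s(u,x) - Tsum k1 c u := by
  by_contra hcon
  push_neg at hcon
  have HF : ∀ u v w x : Fin (k1+4), v ≠ u → w ≠ u → x ≠ u → v ≠ w → x ≠ v → x ≠ w →
      c s(v,w) ≠ c s(u,w) + c s(u,x) - Tsum k1 c u := by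
    intro u v w x h1 h2 h3 h4 h5 h6
    exact hcon u v w x ⟨h1,h2,h3,h4,h5,h6⟩
  by_cases hconst : ∃ u a, ∀ y, y ≠ u → c s(u,y) = a
  · obtain ⟨u, a, h⟩ := hconst
    exact const_case k1 hk4 h31 c HF u a h
  · push_neg at hconst
    set u : Fin (k1+4) := ⟨0, by omega⟩ with hu
    obtain ⟨i, hi⟩ := missing_value k1 hk4 c HF u
    obtain ⟨y0, hy0u⟩ := exists_outside ({u} : Finset (Fin (k1+4)))
      (by simp only [Finset.card_singleton]; omega)
    simp only [Finset.mem_singleton] at hy0u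
    obtain ⟨y1, hy1u, hy1⟩ := hconst u (c s(u, y0))
    set α := c s(u, y0) with hαdef
    set β := c s(u, y1) with hβdef
    have hαβ : α ≠ β := fun h => hy1 h.symm
    have hαi : α ≠ i := hi y0 hy0u
    have hβi : β ≠ i := hi y1 hy1u
    have dich : ∀ y, y ≠ u → c s(u,y) = α ∨ c s(u,y) = β := by
      intro y hy
      have fact : ∀ z i α β : ZMod 3, z ≠ i → α ≠ i → β ≠ i → α ≠ β → z = α ∨ z = β := by decide
      exact fact _ i α β (hi y hy) hαi hβi hαβ
    set A := (Finset.univ.erase u).filter (fun y => c s(u,y) = α) with hAdef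
    set B := (Finset.univ.erase u).filter (fun y => c s(u,y) = β) with hBdef
    have hy0A : y0 ∈ A :=
      Finset.mem_filter.mpr ⟨Finset.mem_erase.mpr ⟨hy0u, Finset.mem_univ _⟩, rfl⟩
    have hy1B : y1 ∈ B :=
      Finset.mem_filter.mpr ⟨Finset.mem_erase.mpr ⟨hy1u, Finset.mem_univ _⟩, rfl⟩
    have hy01 : y0 ≠ y1 := by
      intro h
      exact hαβ (by rw [hαdef, hβdef, h])
    by_cases hA2 : 2 ≤ A.card
    · by_cases hB2 : 2 ≤ B.card
      · have hx1card : 0 < (A.erase y0).card := by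
          rw [Finset.card_erase_of_mem hy0A]; omega
        obtain ⟨x1, hx1⟩ := Finset.card_pos.mp hx1card
        have hx1e := Finset.mem_erase.mp hx1
        have hx1f := Finset.mem_filter.mp hx1e.2
        have hx1u : x1 ≠ u := Finset.ne_of_mem_erase hx1f.1
        have hx1y1 : x1 ≠ y1 := by
          intro h
          exact hαβ (by rw [← hx1f.2, h])
        have hx2card : 0 < (B.erase y1).card := by
          rw [Finset.card_erase_of_mem hy1B]; omega
        obtain ⟨x2, hx2⟩ := Finset.card_pos.mp hx2card
        have hx2e := Finset.mem_erase.mp hx2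
        have hx2f := Finset.mem_filter.mp hx2e.2
        have hx2u : x2 ≠ u := Finset.ne_of_mem_erase hx2f.1
        have hx2y0 : x2 ≠ y0 := by
          intro h
          exact hαβ (by rw [← hx2f.2, h])
        have h1 := HF u y0 y1 x1 hy0u hy1u hx1u hy01 hx1e.1 hx1y1
        have h2 := HF u y0 y1 x2 hy0u hy1u hx2u hy01 hx2y0 hx2e.1
        have h3 := HF u y1 y0 x1 hy1u hy0u hx1u (Ne.symm hy01) hx1y1 hx1e.1
        rw [hx1f.2] at h1
        rw [hx2f.2] at h2
        rw [hx1f.2] at h3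
        rw [show (s(y1,y0) : Sym2 (Fin (k1+4))) = s(y0,y1) from Sym2.eq_swap] at h3
        rw [← hβdef] at h1 h2
        rw [← hαdef] at h3
        have fact5 : ∀ z T α β : ZMod 3, α ≠ β →
            z ≠ β + α - T → z ≠ β + β - T → z ≠ α + α - T → False := by decide
        exact fact5 (c s(y0,y1)) (Tsum k1 c u) α β hαβ h1 h2 h3
      · have hB1 : ∀ t ∈ B, t = y1 := by
          intro t ht
          by_contra hne
          exact hB2 (Finset.one_lt_card.mp (Finset.one_lt_card.mpr ⟨t, ht, y1, hy1B, hne⟩) |>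
            fun _ => Finset.one_lt_card.mpr ⟨t, ht, y1, hy1B, hne⟩)
        have hAall : ∀ y, y ≠ u → y ≠ y1 → c s(u,y) = α := by
          intro y hyu hyy1
          rcases dich y hyu with h | h
          · exact h
          · exact absurd (hB1 y (Finset.mem_filter.mpr
              ⟨Finset.mem_erase.mpr ⟨hyu, Finset.mem_univ _⟩, h⟩)) hyy1
        have hsc := single_case k1 hk4 h31 c HF u y1 hy1u α β hαβ rfl hAall
        obtain ⟨t, ht, htne⟩ := hconst y1 β
        exact htne (hsc t ht)
    · have hA1 : ∀ t ∈ A, t = y0 := by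
        intro t ht
        by_contra hne
        exact hA2 (Finset.one_lt_card.mpr ⟨t, ht, y0, hy0A, hne⟩)
      have hBall : ∀ y, y ≠ u → y ≠ y0 → c s(u,y) = β := by
        intro y hyu hyy0
        rcases dich y hyu with h | h
        · exact absurd (hA1 y (Finset.mem_filter.mpr
            ⟨Finset.mem_erase.mpr ⟨hyu, Finset.mem_univ _⟩, h⟩)) hyy0
        · exact h
      have hsc := single_case k1 hk4 h31 c HF u y0 hy0u β α (Ne.symm hαβ) rfl hBall
      obtain ⟨t, ht, htne⟩ := hconst y0 α
      exact htne (hsc t ht)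

lemma upper_bound (k1 : ℕ) (hk4 : 4 ≤ k1) (h31 : k1 % 3 = 1) (m : ℕ) (hm : k1+4 ≤ m)
    (c : Sym2 (Fin m) → ZMod 3) :
    ∃ f : Fin (k1 + 3) ↪ Fin m,
      ∑ e ∈ (doubleStar k1).edgeFinset, c (e.map f) = 0 := by
  set cast : Fin (k1+4) ↪ Fin m := (Fin.castLEEmb hm) with hcast
  set c' : Sym2 (Fin (k1+4)) → ZMod 3 := fun e => c (e.map cast) with hc'def
  have hc' : ∀ a b : Fin (k1+4), c' s(a,b) = c s(cast a, cast b) := fun a b => by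
    rw [hc'def]; simp only [Sym2.map_pair_eq]
  obtain ⟨u, v, w, x, ⟨hvu, hwu, hxu, hvw, hxv, hxw⟩, heq⟩ := core k1 hk4 h31 c'
  set L : Finset (Fin (k1+4)) := Finset.univ \ {u,v,w,x} with hLdef
  have hcard4 : ({u,v,w,x} : Finset (Fin (k1+4))).card = 4 := by
    rw [Finset.card_insert_of_notMem (by
        simp only [Finset.mem_insert, Finset.mem_singleton, not_or]
        exact ⟨Ne.symm hvu, Ne.symm hwu, Ne.symm hxu⟩),
      Finset.card_insert_of_notMem (by
        simp only [Finset.mem_insert, Finset.mem_singleton, not_or]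
        exact ⟨hvw, Ne.symm hxv⟩),
      Finset.card_insert_of_notMem (by
        simp only [Finset.mem_singleton]
        exact Ne.symm hxw),
      Finset.card_singleton]
  have hLcard : L.card = k1 := by
    rw [hLdef, Finset.card_sdiff_of_subset (Finset.subset_univ _), hcard4]
    simp
  set eL := L.orderIsoOfFin hLcard with heL
  set ℓ : Fin k1 → Fin (k1+4) := fun j => (eL j : Fin (k1+4)) with hℓdef
  have hℓinj : Function.Injective ℓ := fun a b h =>
    eL.injective (Subtype.ext h)
  have hℓmem : ∀ j, ℓ j ∈ L := fun j => (eL j).2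
  have hℓne : ∀ j, ℓ j ≠ u ∧ ℓ j ≠ v ∧ ℓ j ≠ w ∧ ℓ j ≠ x := by
    intro j
    have := hℓmem j
    rw [hLdef, Finset.mem_sdiff] at this
    simpa only [Finset.mem_insert, Finset.mem_singleton, not_or] using this.2
  set f0 : Fin (k1+3) → Fin (k1+4) := fun j =>
    if (j:ℕ) = 0 then u else if (j:ℕ) = 1 then v else if (j:ℕ) = k1+2 then w
    else ℓ ⟨min ((j:ℕ)-2) (k1-1), by omega⟩ with hf0def
  have e0 : ∀ j : Fin (k1+3), (j:ℕ) = 0 → f0 j = u := by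
    intro j h; rw [hf0def]; simp only; rw [if_pos h]
  have e1 : ∀ j : Fin (k1+3), (j:ℕ) = 1 → f0 j = v := by
    intro j h; rw [hf0def]; simp only; rw [if_neg (by omega), if_pos h]
  have eW : ∀ j : Fin (k1+3), (j:ℕ) = k1+2 → f0 j = w := by
    intro j h; rw [hf0def]; simp only; rw [if_neg (by omega), if_neg (by omega), if_pos h]
  have eE : ∀ (j : Fin (k1+3)) (t : Fin k1), (t:ℕ) = (j:ℕ) - 2 →
      2 ≤ (j:ℕ) → (j:ℕ) ≤ k1+1 → f0 j = ℓ t := by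
    intro j t ht h2 h3
    rw [hf0def]; simp only
    rw [if_neg (by omega), if_neg (by omega), if_neg (by omega)]
    congr 1
    exact Fin.ext (by simp only [Fin.val_mk]; omega)
  have hcat : ∀ j : Fin (k1+3), (j:ℕ) = 0 ∨ (j:ℕ) = 1 ∨ (j:ℕ) = k1+2 ∨
      (2 ≤ (j:ℕ) ∧ (j:ℕ) ≤ k1+1) := by
    intro j
    have := j.2
    omega
  have hinj : Function.Injective f0 := by
    intro a b hab
    rcases hcat a with ha | ha | ha | ⟨ha1, ha2⟩ <;>
      rcases hcat b with hb | hb | hb | ⟨hb1, hb2⟩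
    · exact Fin.ext (by omega)
    · rw [e0 a ha, e1 b hb] at hab; exact absurd hab.symm hvu
    · rw [e0 a ha, eW b hb] at hab; exact absurd hab.symm hwu
    · rw [e0 a ha, eE b ⟨(b:ℕ)-2, by omega⟩ rfl hb1 hb2] at hab
      exact absurd hab.symm (hℓne _).1
    · rw [e1 a ha, e0 b hb] at hab; exact absurd hab hvu
    · exact Fin.ext (by omega)
    · rw [e1 a ha, eW b hb] at hab; exact absurd hab hvw
    · rw [e1 a ha, eE b ⟨(b:ℕ)-2, by omega⟩ rfl hb1 hb2] at hab
      exact absurd hab.symm (hℓne _).2.1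
    · rw [eW a ha, e0 b hb] at hab; exact absurd hab hwu
    · rw [eW a ha, e1 b hb] at hab; exact absurd hab.symm hvw
    · exact Fin.ext (by omega)
    · rw [eW a ha, eE b ⟨(b:ℕ)-2, by omega⟩ rfl hb1 hb2] at hab
      exact absurd hab.symm (hℓne _).2.2.1
    · rw [eE a ⟨(a:ℕ)-2, by omega⟩ rfl ha1 ha2, e0 b hb] at hab
      exact absurd hab (hℓne _).1
    · rw [eE a ⟨(a:ℕ)-2, by omega⟩ rfl ha1 ha2, e1 b hb] at hab
      exact absurd hab (hℓne _).2.1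
    · rw [eE a ⟨(a:ℕ)-2, by omega⟩ rfl ha1 ha2, eW b hb] at hab
      exact absurd hab (hℓne _).2.2.1
    · rw [eE a ⟨(a:ℕ)-2, by omega⟩ rfl ha1 ha2,
        eE b ⟨(b:ℕ)-2, by omega⟩ rfl hb1 hb2] at hab
      have := hℓinj hab
      rw [Fin.ext_iff] at this
      simp only [Fin.val_mk] at this
      exact Fin.ext (by omega)
  refine ⟨(⟨f0, hinj⟩ : Fin (k1+3) ↪ Fin (k1+4)).trans cast, ?_⟩
  rw [doubleStar_sum]
  simp only [Function.Embedding.trans_apply, Function.Embedding.coeFn_mk]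
  rw [e0 ⟨0, by omega⟩ rfl, e1 ⟨1, by omega⟩ rfl, eW ⟨k1+2, by omega⟩ rfl]
  have hstep : ∀ j : Fin k1, f0 ⟨(j:ℕ)+2, by have := j.2; omega⟩ = ℓ j := by
    intro j
    exact eE _ j (by simp only [Fin.val_mk]; omega) (by simp only [Fin.val_mk]; omega)
      (by simp only [Fin.val_mk]; have := j.2; omega)
  rw [Finset.sum_congr rfl (fun (j : Fin k1) _ => by rw [hstep j])]
  simp only [← hc']
  have hsum2 : ∑ j : Fin k1, c' s(u, ℓ j) = ∑ y ∈ L, c' s(u, y) := by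
    rw [← Finset.sum_coe_sort L (fun y => c' s(u, y))]
    exact Fintype.sum_equiv eL.toEquiv _ _ (fun j => rfl)
  rw [hsum2, hLdef, Finset.sum_sdiff_eq_sub (Finset.subset_univ _)]
  rw [Finset.sum_insert (by
      simp only [Finset.mem_insert, Finset.mem_singleton, not_or]
      exact ⟨Ne.symm hvu, Ne.symm hwu, Ne.symm hxu⟩),
    Finset.sum_insert (by
      simp only [Finset.mem_insert, Finset.mem_singleton, not_or]
      exact ⟨hvw, Ne.symm hxv⟩),
    Finset.sum_insert (by
      simp only [Finset.mem_singleton]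
      exact Ne.symm hxw),
    Finset.sum_singleton]
  have hT : Tsum k1 c' u = (∑ y ∈ Finset.univ, c' s(u,y)) - c' s(u,u) := by
    unfold Tsum
    exact Finset.sum_erase_eq_sub (Finset.mem_univ u)
  rw [hT] at heq
  linear_combination heq

theorem stmt_17 (k1 : ℕ) (hk : 2 ≤ k1) (hn : (k1 + 3) % 3 = 1) :
    IsLeast {N : ℕ | ∀ m : ℕ, N ≤ m → ∀ c : Sym2 (Fin m) → ZMod 3,
      ∃ f : Fin (k1 + 3) ↪ Fin m,
        ∑ e ∈ (doubleStar k1).edgeFinset, c (e.map f) = 0} ((k1 + 3) + 1) := by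
  constructor
  · intro m hm c
    exact upper_bound k1 (by omega) (by omega) m (by omega) c
  · intro N hN
    by_contra hlt
    push_neg at hlt
    obtain ⟨f, hf⟩ := hN (k1+3) (by omega)
      (fun e => if (0 : Fin (k1+3)) ∈ e then (1 : ZMod 3) else 0)
    exact lower_bound k1 hk hn _ (fun e => rfl) f hf
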